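/- For a smooth vector field X : ℝ³ → ℝ³ and n ∈ ℕ, set Ñₙ(X) := sup_{x∈ℝ³} (1+‖x‖)·‖iteratedFDeriv ℝ n X x‖ ∈ [0,∞]. Let (Xₘ)_{m∈ℕ} be a sequence of Beltrami fields on ℝ³ with sharp decay which is Cauchy in every seminorm Ñₙ, i.e. for every n ∈ ℕ and ε > 0 there exists M such that Ñₙ(Xₘ − Xₘ') ≤ ε for all m, m' ≥ M. Then there exists a Beltrami field X on ℝ³ with sharp decay such that Ñₙ(Xₘ − X) → 0 as m → ∞, for every n ∈ ℕ. -/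

import Mathlib

noncomputable section

open Filter Topology

/-- Partial derivative of a scalar function on `ℝ³` in the `i`-th coordinate direction. -/
def pderiv3 (i : Fin 3) (f : EuclideanSpace ℝ (Fin 3) → ℝ) :
    EuclideanSpace ℝ (Fin 3) → ℝ :=
  fun x => fderiv ℝ f x (EuclideanSpace.single i (1 : ℝ))

/-- The curl of a vector field `X = (X₀, X₁, X₂)` on `ℝ³`:
`curl X = (∂₁X₂ − ∂₂X₁, ∂₂X₀ − ∂₀X₂, ∂₀X₁ − ∂₁X₀)`. -/
def curl3 (X : EuclideanSpace ℝ (Fin 3) → EuclideanSpace ℝ (Fin 3)) :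
    EuclideanSpace ℝ (Fin 3) → EuclideanSpace ℝ (Fin 3) :=
  fun x => (WithLp.equiv 2 (Fin 3 → ℝ)).symm
    ![pderiv3 1 (fun y => X y 2) x - pderiv3 2 (fun y => X y 1) x,
      pderiv3 2 (fun y => X y 0) x - pderiv3 0 (fun y => X y 2) x,
      pderiv3 0 (fun y => X y 1) x - pderiv3 1 (fun y => X y 0) x]

/-- `X` has sharp decay: every iterated derivative is dominated by `(1 + ‖x‖)⁻¹`. -/
def HasSharpDecay (X : EuclideanSpace ℝ (Fin 3) → EuclideanSpace ℝ (Fin 3)) : Prop :=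
  ∀ n : ℕ, ∃ C : ℝ, ∀ x : EuclideanSpace ℝ (Fin 3),
    (1 + ‖x‖) * ‖iteratedFDeriv ℝ n X x‖ ≤ C

section Aux

local notation "E3" => EuclideanSpace ℝ (Fin 3)

lemma iter_sub_aux (n : ℕ) (f g : E3 → E3) (hf : ContDiff ℝ (⊤ : ℕ∞) f)
    (hg : ContDiff ℝ (⊤ : ℕ∞) g) (x : E3) :
    iteratedFDeriv ℝ n (fun y => f y - g y) x =
      iteratedFDeriv ℝ n f x - iteratedFDeriv ℝ n g x := by
  have hf' : ContDiff ℝ (n : ℕ∞) f := hf.of_le (by exact_mod_cast le_top)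
  have hg' : ContDiff ℝ (n : ℕ∞) g := hg.of_le (by exact_mod_cast le_top)
  have hng : ContDiff ℝ (n : ℕ∞) (-g) := hg'.neg
  have h1 : (fun y => f y - g y) = f + (-g) := by
    funext y; simp [sub_eq_add_neg]
  rw [h1, iteratedFDeriv_add_apply hf'.contDiffAt hng.contDiffAt, iteratedFDeriv_neg_apply, sub_eq_add_neg]

lemma pderiv3_eq (W : E3 → E3) (hW : Differentiable ℝ W) (i j : Fin 3) (x : E3) :
    pderiv3 i (fun y => W y j) x = (fderiv ℝ W x (EuclideanSpace.single i 1)) j := by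
  have h : HasFDerivAt (fun y => W y j)
      ((EuclideanSpace.proj (𝕜 := ℝ) j).comp (fderiv ℝ W x)) x :=
    ((EuclideanSpace.proj (𝕜 := ℝ) j).hasFDerivAt.comp x (hW x).hasFDerivAt)
  simp [pderiv3, h.fderiv]

end Aux

/-- **Sequential completeness of the space `ℬ(ℝ³)` of Beltrami fields with sharp decay**
(Section 4.1). A sequence of Beltrami fields with sharp decay which is Cauchy for
every weighted seminorm `Ñₙ(X) = sup_x (1+‖x‖)·‖iteratedFDeriv ℝ n X x‖` converges, in
every seminorm `Ñₙ`, to a Beltrami field with sharp decay. -/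
theorem beltrami_sharpDecay_complete
    (X : ℕ → EuclideanSpace ℝ (Fin 3) → EuclideanSpace ℝ (Fin 3))
    (hsmooth : ∀ m : ℕ, ContDiff ℝ (⊤ : ℕ∞) (X m))
    (hBeltrami : ∀ m : ℕ, ∀ x, curl3 (X m) x = X m x)
    (hdecay : ∀ m : ℕ, HasSharpDecay (X m))
    (hCauchy : ∀ n : ℕ, ∀ ε : ℝ, 0 < ε → ∃ M : ℕ, ∀ m ≥ M, ∀ m' ≥ M, ∀ x,
      (1 + ‖x‖) * ‖iteratedFDeriv ℝ n (fun y => X m y - X m' y) x‖ ≤ ε) :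
    ∃ Y : EuclideanSpace ℝ (Fin 3) → EuclideanSpace ℝ (Fin 3),
      ContDiff ℝ (⊤ : ℕ∞) Y ∧ (∀ x, curl3 Y x = Y x) ∧ HasSharpDecay Y ∧
      ∀ n : ℕ, ∀ ε : ℝ, 0 < ε → ∃ M : ℕ, ∀ m ≥ M, ∀ x,
        (1 + ‖x‖) * ‖iteratedFDeriv ℝ n (fun y => X m y - Y y) x‖ ≤ ε := by
  classical
  -- unweighted uniform Cauchy estimates
  have hone : ∀ x : EuclideanSpace ℝ (Fin 3), (1 : ℝ) ≤ 1 + ‖x‖ := fun x =>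
    le_add_of_nonneg_right (norm_nonneg x)
  have hCau' : ∀ n : ℕ, ∀ ε : ℝ, 0 < ε → ∃ M : ℕ, ∀ m ≥ M, ∀ m' ≥ M, ∀ x,
      ‖iteratedFDeriv ℝ n (X m) x - iteratedFDeriv ℝ n (X m') x‖ ≤ ε := by
    intro n ε hε
    obtain ⟨M, hM⟩ := hCauchy n ε hε
    refine ⟨M, fun m hm m' hm' x => ?_⟩
    have h := hM m hm m' hm' x
    rw [iter_sub_aux n _ _ (hsmooth m) (hsmooth m') x] at h
    calc ‖iteratedFDeriv ℝ n (X m) x - iteratedFDeriv ℝ n (X m') x‖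
        ≤ (1 + ‖x‖) * ‖iteratedFDeriv ℝ n (X m) x - iteratedFDeriv ℝ n (X m') x‖ :=
          le_mul_of_one_le_left (norm_nonneg _) (hone x)
      _ ≤ ε := h
  -- pointwise limits of all iterated derivatives
  have hex : ∀ (n : ℕ) (x : EuclideanSpace ℝ (Fin 3)),
      ∃ L, Tendsto (fun m => iteratedFDeriv ℝ n (X m) x) atTop (𝓝 L) := by
    intro n x
    refine cauchySeq_tendsto_of_complete ?_
    rw [Metric.cauchySeq_iff]
    intro ε hε
    obtain ⟨M, hM⟩ := hCau' n (ε / 2) (half_pos hε)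
    refine ⟨M, fun a ha b hb => ?_⟩
    rw [dist_eq_norm]
    exact lt_of_le_of_lt (hM a ha b hb x) (half_lt_self hε)
  choose g hg using hex
  -- uniform convergence of all iterated derivatives
  have hU : ∀ n : ℕ, TendstoUniformly (fun m => iteratedFDeriv ℝ n (X m)) (g n) atTop := by
    intro n
    rw [← tendstoUniformlyOn_univ]
    refine UniformCauchySeqOn.tendstoUniformlyOn_of_tendsto ?_ fun x _ => hg n x
    rw [Metric.uniformCauchySeqOn_iff]
    intro ε hε
    obtain ⟨M, hM⟩ := hCau' n (ε / 2) (half_pos hε)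
    refine ⟨M, fun m hm m' hm' x _ => ?_⟩
    rw [dist_eq_norm]
    exact lt_of_le_of_lt (hM m hm m' hm' x) (half_lt_self hε)
  -- the candidate limit
  set Y : EuclideanSpace ℝ (Fin 3) → EuclideanSpace ℝ (Fin 3) :=
    fun x => continuousMultilinearCurryFin0 ℝ (EuclideanSpace ℝ (Fin 3))
      (EuclideanSpace ℝ (Fin 3)) (g 0 x) with hY
  have hYlim : ∀ x, Tendsto (fun m => X m x) atTop (𝓝 (Y x)) := by
    intro x
    have h := ((continuousMultilinearCurryFin0 ℝ (EuclideanSpace ℝ (Fin 3))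
      (EuclideanSpace ℝ (Fin 3))).continuous.tendsto _).comp (hg 0 x)
    have he : (fun m => continuousMultilinearCurryFin0 ℝ (EuclideanSpace ℝ (Fin 3))
        (EuclideanSpace ℝ (Fin 3)) (iteratedFDeriv ℝ 0 (X m) x)) = fun m => X m x := by
      funext m
      rw [iteratedFDeriv_zero_eq_comp]
      simp
    rw [← he]
    exact h
  have hiter0 : iteratedFDeriv ℝ 0 Y = g 0 := by
    funext x
    rw [iteratedFDeriv_zero_eq_comp]
    show (continuousMultilinearCurryFin0 ℝ (EuclideanSpace ℝ (Fin 3))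
      (EuclideanSpace ℝ (Fin 3))).symm (Y x) = g 0 x
    rw [hY]
    exact LinearIsometryEquiv.symm_apply_apply _ _
  -- key derivative fact
  have key : ∀ n : ℕ, iteratedFDeriv ℝ n Y = g n → ∀ x,
      HasFDerivAt (iteratedFDeriv ℝ n Y)
        (continuousMultilinearCurryLeftEquiv ℝ
          (fun _ : Fin (n + 1) => EuclideanSpace ℝ (Fin 3))
          (EuclideanSpace ℝ (Fin 3)) (g (n + 1) x)) x := by
    intro n hn x
    set e := continuousMultilinearCurryLeftEquiv ℝ
      (fun _ : Fin (n + 1) => EuclideanSpace ℝ (Fin 3)) (EuclideanSpace ℝ (Fin 3)) with he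
    have h1 : TendstoUniformly (fun m x => e (iteratedFDeriv ℝ (n + 1) (X m) x))
        (fun x => e (g (n + 1) x)) atTop :=
      (e.isometry.uniformContinuous).comp_tendstoUniformly (hU (n + 1))
    have h2 : ∀ (m : ℕ) (x : EuclideanSpace ℝ (Fin 3)),
        HasFDerivAt (iteratedFDeriv ℝ n (X m)) (e (iteratedFDeriv ℝ (n + 1) (X m) x)) x := by
      intro m x
      have hlt : ((n : ℕ) : WithTop ℕ∞) < ((n + 1 : ℕ) : WithTop ℕ∞) := by
        exact_mod_cast Nat.lt_succ_self n
      have hd : DifferentiableAt ℝ (iteratedFDeriv ℝ n (X m)) x :=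
        (ContDiff.differentiable_iteratedFDeriv hlt
          ((hsmooth m).of_le (by exact_mod_cast le_top))) x
      exact hd.hasFDerivAt
    have h3 : ∀ x, Tendsto (fun m => iteratedFDeriv ℝ n (X m) x) atTop
        (𝓝 (iteratedFDeriv ℝ n Y x)) := by
      intro x; rw [hn]; exact hg n x
    exact hasFDerivAt_of_tendstoUniformly h1 h2 h3 x
  have hiter : ∀ n : ℕ, iteratedFDeriv ℝ n Y = g n := by
    intro n
    induction n with
    | zero => exact hiter0
    | succ n ih =>
      funext x
      have h := (key n ih x).fderiv
      rw [iteratedFDeriv_succ_eq_comp_left]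
      show (continuousMultilinearCurryLeftEquiv ℝ
        (fun _ : Fin (n + 1) => EuclideanSpace ℝ (Fin 3)) (EuclideanSpace ℝ (Fin 3))).symm
        (fderiv ℝ (iteratedFDeriv ℝ n Y) x) = g (n + 1) x
      rw [h]
      exact LinearIsometryEquiv.symm_apply_apply _ _
  have hdiffY : ∀ n : ℕ, Differentiable ℝ (iteratedFDeriv ℝ n Y) := fun n x =>
    (key n (hiter n) x).differentiableAt
  have hYsmooth : ContDiff ℝ (⊤ : ℕ∞) Y :=
    contDiff_of_differentiable_iteratedFDeriv fun m _ => hdiffY m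
  have hYdiff : Differentiable ℝ Y := hYsmooth.differentiable (by simp)
  -- Beltrami property of the limit
  have hXdiff : ∀ m : ℕ, Differentiable ℝ (X m) := fun m =>
    (hsmooth m).differentiable (by simp)
  have hfdY : ∀ x (v : EuclideanSpace ℝ (Fin 3)),
      Tendsto (fun m => fderiv ℝ (X m) x v) atTop (𝓝 (fderiv ℝ Y x v)) := by
    intro x v
    have h1 : ∀ (W : EuclideanSpace ℝ (Fin 3) → EuclideanSpace ℝ (Fin 3)),
        fderiv ℝ W x v = iteratedFDeriv ℝ 1 W x ![v] := by
      intro W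
      rw [iteratedFDeriv_one_apply]
      simp
    simp only [h1]
    have hcont : Continuous fun A : ContinuousMultilinearMap ℝ
        (fun _ : Fin 1 => EuclideanSpace ℝ (Fin 3)) (EuclideanSpace ℝ (Fin 3)) => A ![v] :=
      continuous_eval_const _
    have := (hcont.tendsto _).comp (hg 1 x)
    rw [hiter 1]
    exact this
  have hcomp : ∀ x (i j : Fin 3),
      Tendsto (fun m => pderiv3 i (fun y => X m y j) x) atTop
        (𝓝 (pderiv3 i (fun y => Y y j) x)) := by
    intro x i j
    have h1 := hfdY x (EuclideanSpace.single i 1)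
    have h2 := ((EuclideanSpace.proj (𝕜 := ℝ) j).continuous.tendsto _).comp h1
    have e1 : (fun m => pderiv3 i (fun y => X m y j) x) =
        fun m => (fderiv ℝ (X m) x (EuclideanSpace.single i 1)) j :=
      funext fun m => pderiv3_eq (X m) (hXdiff m) i j x
    rw [e1, pderiv3_eq Y hYdiff i j x]
    exact h2
  have hBelY : ∀ x, curl3 Y x = Y x := by
    intro x
    ext j
    have hR : Tendsto (fun m => (curl3 (X m) x) j) atTop (𝓝 (Y x j)) := by
      have := ((EuclideanSpace.proj (𝕜 := ℝ) j).continuous.tendsto _).comp (hYlim x)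
      simp only [hBeltrami]
      exact this
    have hL : Tendsto (fun m => (curl3 (X m) x) j) atTop (𝓝 ((curl3 Y x) j)) := by
      simp only [curl3, WithLp.equiv_symm_apply, WithLp.ofLp_toLp]
      fin_cases j <;>
        simp only [Matrix.cons_val_zero, Matrix.cons_val_one, Matrix.head_cons,
          Matrix.cons_val_two, Matrix.tail_cons] <;>
        exact ((hcomp x _ _).sub (hcomp x _ _))
    exact tendsto_nhds_unique hL hR
  -- weighted convergence to the limit
  have hweighted : ∀ n : ℕ, ∀ ε : ℝ, 0 < ε → ∃ M : ℕ, ∀ m ≥ M, ∀ x,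
      (1 + ‖x‖) * ‖iteratedFDeriv ℝ n (X m) x - g n x‖ ≤ ε := by
    intro n ε hε
    obtain ⟨M, hM⟩ := hCauchy n ε hε
    refine ⟨M, fun m hm x => ?_⟩
    have ht : Tendsto (fun m' => (1 + ‖x‖) *
        ‖iteratedFDeriv ℝ n (X m) x - iteratedFDeriv ℝ n (X m') x‖) atTop
        (𝓝 ((1 + ‖x‖) * ‖iteratedFDeriv ℝ n (X m) x - g n x‖)) :=
      (((hg n x).const_sub _).norm).const_mul _
    refine le_of_tendsto ht ?_
    filter_upwards [eventually_ge_atTop M] with m' hm'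
    have h := hM m hm m' hm' x
    rwa [iter_sub_aux n _ _ (hsmooth m) (hsmooth m') x] at h
  -- sharp decay of the limit
  have hYdecay : HasSharpDecay Y := by
    intro n
    obtain ⟨M, hM⟩ := hweighted n 1 one_pos
    obtain ⟨C, hC⟩ := hdecay M n
    refine ⟨C + 1, fun x => ?_⟩
    have h1 := hM M le_rfl x
    have h2 : ‖iteratedFDeriv ℝ n Y x‖ ≤ ‖iteratedFDeriv ℝ n (X M) x‖ +
        ‖iteratedFDeriv ℝ n (X M) x - g n x‖ := by
      rw [hiter n]
      calc ‖g n x‖ = ‖iteratedFDeriv ℝ n (X M) x -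
            (iteratedFDeriv ℝ n (X M) x - g n x)‖ := by congr 1; abel
        _ ≤ _ := norm_sub_le _ _
    calc (1 + ‖x‖) * ‖iteratedFDeriv ℝ n Y x‖
        ≤ (1 + ‖x‖) * (‖iteratedFDeriv ℝ n (X M) x‖ +
            ‖iteratedFDeriv ℝ n (X M) x - g n x‖) := by
          apply mul_le_mul_of_nonneg_left h2
          linarith [norm_nonneg x]
      _ = (1 + ‖x‖) * ‖iteratedFDeriv ℝ n (X M) x‖ +
            (1 + ‖x‖) * ‖iteratedFDeriv ℝ n (X M) x - g n x‖ := by ring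
      _ ≤ C + 1 := add_le_add (hC x) h1
  refine ⟨Y, hYsmooth, hBelY, hYdecay, ?_⟩
  intro n ε hε
  obtain ⟨M, hM⟩ := hweighted n ε hε
  refine ⟨M, fun m hm x => ?_⟩
  rw [iter_sub_aux n _ _ (hsmooth m) hYsmooth x, hiter n]
  exact hM m hm x

end
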